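/- Let X be a real n×p matrix such that XᵀX is positive definite, let S be a symmetric positive semidefinite p×p real matrix, and let y ∈ ℝ^n. For every λ > 0 the matrix XᵀX + λS is positive definite, hence invertible; define β̂(λ) = (XᵀX + λS)⁻¹ Xᵀ y, the minimizer of ‖y − Xβ‖² + λ·βᵀSβ. Then, as λ → ∞, β̂(λ) converges to the unique minimizer of β ↦ ‖y − Xβ‖² over the subspace {β ∈ ℝ^p : Sβ = 0} (the null space of the penalty), this constrained minimizer being unique because XᵀX is positive definite. -/

import Mathlib

open Matrix Filter




variable {n p : ℕ}

lemma rls_sum_sq_eq (y z : Fin n → ℝ) :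
    ∑ i, (y i - z i) ^ 2 = y ⬝ᵥ y - 2 * (z ⬝ᵥ y) + z ⬝ᵥ z := by
  simp only [dotProduct, Finset.mul_sum]
  rw [show ∑ i, (y i - z i) ^ 2 = ∑ i, (y i * y i - 2 * (z i * y i) + z i * z i) from
    Finset.sum_congr rfl fun i _ => by ring]
  rw [Finset.sum_add_distrib, Finset.sum_sub_distrib]

lemma rls_mulVec_dot (X : Matrix (Fin n) (Fin p) ℝ) (β : Fin p → ℝ) (z : Fin n → ℝ) :
    (X *ᵥ β) ⬝ᵥ z = β ⬝ᵥ (Xᵀ *ᵥ z) := by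
  rw [mulVec_transpose, dotProduct_comm (X *ᵥ β) z, dotProduct_mulVec, dotProduct_comm]

lemma rls_symm_dot {M : Matrix (Fin p) (Fin p) ℝ} (hM : M.IsHermitian)
    (u v : Fin p → ℝ) : u ⬝ᵥ (M *ᵥ v) = v ⬝ᵥ (M *ᵥ u) := by
  rw [dotProduct_mulVec, dotProduct_comm, ← mulVec_transpose,
    show Mᵀ = M from (conjTranspose_eq_transpose_of_trivial M) ▸ hM]

lemma rls_cs (u v : Fin p → ℝ) : (u ⬝ᵥ v) ^ 2 ≤ (u ⬝ᵥ u) * (v ⬝ᵥ v) := by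
  simpa only [dotProduct, pow_two] using Finset.sum_mul_sq_le_sq_mul_sq Finset.univ u v

lemma rls_dot_self_nonneg (v : Fin p → ℝ) : 0 ≤ v ⬝ᵥ v :=
  Finset.sum_nonneg fun i _ => mul_self_nonneg _

lemma rls_dot_self_pos {v : Fin p → ℝ} (hv : v ≠ 0) : 0 < v ⬝ᵥ v := by
  rcases Function.ne_iff.1 hv with ⟨i, hi⟩
  exact Finset.sum_pos' (fun j _ => mul_self_nonneg _)
    ⟨i, Finset.mem_univ i, mul_self_pos.mpr hi⟩

lemma rls_posdef_dot {A : Matrix (Fin p) (Fin p) ℝ} (hA : A.PosDef)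
    {v : Fin p → ℝ} (hv : v ≠ 0) : 0 < v ⬝ᵥ (A *ᵥ v) := by
  simpa using hA.dotProduct_mulVec_pos hv

lemma rls_psd_dot {A : Matrix (Fin p) (Fin p) ℝ} (hA : A.PosSemidef)
    (v : Fin p → ℝ) : 0 ≤ v ⬝ᵥ (A *ᵥ v) := by
  simpa using hA.dotProduct_mulVec_nonneg v

lemma rls_cont (M : Matrix (Fin p) (Fin p) ℝ) :
    Continuous fun v : Fin p → ℝ => v ⬝ᵥ (M *ᵥ v) := by
  simp only [dotProduct, mulVec]
  exact continuous_finset_sum _ fun i _ => (continuous_apply i).mul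
    (continuous_finset_sum _ fun j _ => continuous_const.mul (continuous_apply j))

lemma rls_coercive {A : Matrix (Fin p) (Fin p) ℝ} (hA : A.PosDef) :
    ∃ c > 0, ∀ v : Fin p → ℝ, c * (v ⬝ᵥ v) ≤ v ⬝ᵥ (A *ᵥ v) := by
  rcases Nat.eq_zero_or_pos p with hp | hp
  · subst hp
    exact ⟨1, one_pos, fun v => by simp [dotProduct]⟩
  · have cdot : Continuous fun v : Fin p → ℝ => v ⬝ᵥ v :=
      (rls_cont 1).congr fun v => by rw [one_mulVec]
    set K : Set (Fin p → ℝ) := {v | v ⬝ᵥ v = 1} with hK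
    have hclosed : IsClosed K := isClosed_eq cdot continuous_const
    have hsub : K ⊆ Metric.closedBall 0 1 := by
      intro v hv
      simp only [Metric.mem_closedBall, dist_zero_right]
      rw [pi_norm_le_iff_of_nonneg zero_le_one]
      intro i
      rw [Real.norm_eq_abs, abs_le_one_iff_mul_self_le_one]
      calc v i * v i ≤ v ⬝ᵥ v :=
            Finset.single_le_sum (fun j _ => mul_self_nonneg (v j)) (Finset.mem_univ i)
        _ = 1 := hv
    have hcpt : IsCompact K :=
      (isCompact_closedBall (0 : Fin p → ℝ) 1).of_isClosed_subset hclosed hsub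
    have hne : K.Nonempty := by
      refine ⟨Pi.single ⟨0, hp⟩ 1, ?_⟩
      simp [hK, dotProduct, Pi.single_apply]
    obtain ⟨v₀, hv₀K, hmin⟩ := hcpt.exists_isMinOn hne (rls_cont A).continuousOn
    have hv₀ : v₀ ≠ 0 := by
      intro h
      have : v₀ ⬝ᵥ v₀ = 1 := hv₀K
      rw [h] at this; simp at this
    refine ⟨v₀ ⬝ᵥ (A *ᵥ v₀), rls_posdef_dot hA hv₀, fun v => ?_⟩
    rcases eq_or_ne v 0 with rfl | hv
    · simp
    · set t : ℝ := Real.sqrt (v ⬝ᵥ v) with ht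
      have htpos : 0 < t := Real.sqrt_pos.mpr (rls_dot_self_pos hv)
      have ht2 : t * t = v ⬝ᵥ v := Real.mul_self_sqrt (rls_dot_self_nonneg v)
      have huK : (t⁻¹ • v) ∈ K := by
        simp only [hK, Set.mem_setOf_eq, smul_dotProduct, dotProduct_smul, smul_eq_mul]
        field_simp
        linarith [ht2]
      have hle := hmin huK
      have hval : (t⁻¹ • v) ⬝ᵥ (A *ᵥ (t⁻¹ • v)) = t⁻¹ * (t⁻¹ * (v ⬝ᵥ (A *ᵥ v))) := by
        rw [mulVec_smul, smul_dotProduct, dotProduct_smul]; simp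
      rw [isMinOn_iff] at hmin
      have hle2 : v₀ ⬝ᵥ (A *ᵥ v₀) ≤ t⁻¹ * (t⁻¹ * (v ⬝ᵥ (A *ᵥ v))) := by
        rw [← hval]; exact hmin _ huK
      have h3 : (v₀ ⬝ᵥ (A *ᵥ v₀)) * (t * t) ≤ v ⬝ᵥ (A *ᵥ v) := by
        have h4 : t⁻¹ * (t⁻¹ * (v ⬝ᵥ (A *ᵥ v))) * (t * t) = v ⬝ᵥ (A *ᵥ v) := by
          field_simp
        nlinarith [mul_pos htpos htpos]
      rw [← ht2]; linarith

lemma rls_psd_dot_zero {S : Matrix (Fin p) (Fin p) ℝ} (hS : S.PosSemidef)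
    {x : Fin p → ℝ} (h : x ⬝ᵥ (S *ᵥ x) = 0) : S *ᵥ x = 0 := by
  apply (hS.dotProduct_mulVec_zero_iff x).mp
  simpa using h

lemma rls_exists_sol {A S : Matrix (Fin p) (Fin p) ℝ} (hA : A.PosDef) (hS : S.PosSemidef)
    (b : Fin p → ℝ) : ∃ β₀ w : Fin p → ℝ, S *ᵥ β₀ = 0 ∧ A *ᵥ β₀ + S *ᵥ w = b := by
  classical
  set K : Submodule ℝ (Fin p → ℝ) := LinearMap.ker S.mulVecLin with hKdef
  let Φ : (K × (Fin p → ℝ)) →ₗ[ℝ] (Fin p → ℝ) :=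
    { toFun := fun uw => A *ᵥ (uw.1 : Fin p → ℝ) + S *ᵥ uw.2
      map_add' := fun x y => by
        simp only [Submodule.coe_add, Prod.fst_add, Prod.snd_add, mulVec_add]
        abel
      map_smul' := fun c x => by
        simp only [Prod.smul_fst, Prod.smul_snd, Submodule.coe_smul, mulVec_smul,
          RingHom.id_apply, smul_add] }
  set e := WithLp.linearEquiv 2 ℝ (Fin p → ℝ) with he
  set W : Submodule ℝ (EuclideanSpace ℝ (Fin p)) :=
    (LinearMap.range Φ).comap (e : EuclideanSpace ℝ (Fin p) →ₗ[ℝ] (Fin p → ℝ)) with hW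
  have hWtop : W = ⊤ := by
    rw [← Submodule.orthogonal_eq_bot_iff]
    rw [Submodule.eq_bot_iff]
    intro x hx
    rw [Submodule.mem_orthogonal] at hx
    -- inner products with elements of W vanish
    have hdot : ∀ u w : Fin p → ℝ, S *ᵥ u = 0 →
        (A *ᵥ u + S *ᵥ w) ⬝ᵥ (e x) = 0 := by
      intro u w hu
      have hmem : (e.symm (A *ᵥ u + S *ᵥ w)) ∈ W := by
        simp only [hW, Submodule.mem_comap]
        refine ⟨(⟨u, ?_⟩, w), ?_⟩
        · simpa [hKdef, Matrix.mulVecLin_apply] using hu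
        · simp [Φ]
      have := hx _ hmem
      rw [real_inner_comm] at this
      rw [← this]
      rw [PiLp.inner_apply]
      simp only [dotProduct, RCLike.inner_apply, starRingEnd_apply, star_trivial,
        WithLp.linearEquiv_apply, WithLp.linearEquiv_symm_apply, he, WithLp.coe_linearEquiv, WithLp.coe_symm_linearEquiv,
        WithLp.ofLp_add, WithLp.ofLp_toLp, Pi.add_apply, map_add]
      refine Finset.sum_congr rfl fun i _ => ?_
      rfl
    -- first: x ∈ ker S
    have hxS : S *ᵥ (e x) = 0 := by
      apply rls_psd_dot_zero hS
      have h0 := hdot 0 (e x) (by simp)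
      simp only [mulVec_zero, zero_add] at h0
      rw [dotProduct_comm] at h0
      exact h0
    -- then: x = 0 from A posdef
    have hxA : (A *ᵥ (e x)) ⬝ᵥ (e x) = 0 := by
      have h1 := hdot (e x) 0 hxS
      simpa using h1
    by_contra hxne
    have hexne : e x ≠ 0 := by
      simp only [ne_eq, map_eq_zero]
      exact fun h => hxne (by simpa using h)
    have := hA.dotProduct_mulVec_pos hexne
    rw [dotProduct_comm] at hxA
    simp only [star_trivial] at this
    rw [hxA] at this
    exact lt_irrefl 0 this
  have hb : e.symm b ∈ W := hWtop ▸ Submodule.mem_top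
  rw [hW, Submodule.mem_comap] at hb
  obtain ⟨⟨u, w⟩, huw⟩ := hb
  refine ⟨u, w, ?_, ?_⟩
  · have h2 : S.mulVecLin ↑u = 0 := u.2
    rwa [Matrix.mulVecLin_apply] at h2
  · have : A *ᵥ (u : Fin p → ℝ) + S *ᵥ w = e (e.symm b) := huw
    simpa using this

lemma rls_obj_eq (X : Matrix (Fin n) (Fin p) ℝ) (y : Fin n → ℝ)
    (S : Matrix (Fin p) (Fin p) ℝ) (lam : ℝ) (β : Fin p → ℝ) :
    (∑ i, (y i - X.mulVec β i) ^ 2) + lam * (β ⬝ᵥ S.mulVec β)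
      = y ⬝ᵥ y - 2 * (β ⬝ᵥ (Xᵀ *ᵥ y)) + β ⬝ᵥ ((Xᵀ * X + lam • S) *ᵥ β) := by
  have h1 := rls_sum_sq_eq y (X *ᵥ β)
  have h2 : (X *ᵥ β) ⬝ᵥ y = β ⬝ᵥ (Xᵀ *ᵥ y) := rls_mulVec_dot X β y
  have h3 : (X *ᵥ β) ⬝ᵥ (X *ᵥ β) = β ⬝ᵥ ((Xᵀ * X) *ᵥ β) := by
    rw [rls_mulVec_dot X β (X *ᵥ β), mulVec_mulVec]
  have h4 : β ⬝ᵥ ((Xᵀ * X + lam • S) *ᵥ β)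
      = β ⬝ᵥ ((Xᵀ * X) *ᵥ β) + lam * (β ⬝ᵥ (S *ᵥ β)) := by
    rw [add_mulVec, dotProduct_add, smul_mulVec, dotProduct_smul, smul_eq_mul]
  show (∑ i, (y i - (X *ᵥ β) i) ^ 2) + lam * (β ⬝ᵥ (S *ᵥ β)) = _
  rw [h1, h2, h3, h4]
  ring

lemma rls_smul_psd {S : Matrix (Fin p) (Fin p) ℝ} (hS : S.PosSemidef)
    {lam : ℝ} (hlam : 0 ≤ lam) : (lam • S).PosSemidef := by
  refine Matrix.PosSemidef.of_dotProduct_mulVec_nonneg ?_ ?_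
  · show (lam • S)ᴴ = lam • S
    rw [conjTranspose_smul, hS.1]
    simp
  · intro x
    have := hS.dotProduct_mulVec_nonneg x
    rw [smul_mulVec, dotProduct_smul, smul_eq_mul]
    exact mul_nonneg hlam this

lemma rls_inv_sol {M : Matrix (Fin p) (Fin p) ℝ} (hM : M.PosDef) (b : Fin p → ℝ) :
    M *ᵥ (M⁻¹ *ᵥ b) = b := by
  rw [mulVec_mulVec, Matrix.mul_nonsing_inv _ ((Matrix.isUnit_iff_isUnit_det _).mp hM.isUnit),
    one_mulVec]

/-- As the smoothing parameter `λ → ∞`, the penalized least squares estimator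
`β̂(λ) = (XᵀX + λS)⁻¹Xᵀy` (the minimizer of `‖y - Xβ‖² + λ βᵀSβ`) converges to
the unique minimizer of `‖y - Xβ‖²` over the null space `{β : Sβ = 0}` of the
penalty; moreover `XᵀX + λS` is positive definite for every `λ > 0`. -/
theorem ridge_limit_null_space {n p : ℕ}
    (X : Matrix (Fin n) (Fin p) ℝ) (y : Fin n → ℝ)
    (hX : (Xᵀ * X).PosDef)
    (S : Matrix (Fin p) (Fin p) ℝ) (hS : S.PosSemidef)
    (βhat : ℝ → (Fin p → ℝ))
    (hβhat : ∀ lam : ℝ, βhat lam = (Xᵀ * X + lam • S)⁻¹.mulVec (Xᵀ.mulVec y)) :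
    (∀ lam > (0 : ℝ), (Xᵀ * X + lam • S).PosDef) ∧
    (∀ lam > (0 : ℝ), ∀ β : Fin p → ℝ,
      (∑ i, (y i - X.mulVec (βhat lam) i) ^ 2) + lam * (βhat lam ⬝ᵥ S.mulVec (βhat lam)) ≤
        (∑ i, (y i - X.mulVec β i) ^ 2) + lam * (β ⬝ᵥ S.mulVec β)) ∧
    ∃ β₀ : Fin p → ℝ, S.mulVec β₀ = 0 ∧
      (∀ β, S.mulVec β = 0 →
        ∑ i, (y i - X.mulVec β₀ i) ^ 2 ≤ ∑ i, (y i - X.mulVec β i) ^ 2) ∧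
      (∀ β, S.mulVec β = 0 →
        (∀ β', S.mulVec β' = 0 →
          ∑ i, (y i - X.mulVec β i) ^ 2 ≤ ∑ i, (y i - X.mulVec β' i) ^ 2) →
        β = β₀) ∧
      Tendsto βhat atTop (nhds β₀) := by

  classical
  set A := Xᵀ * X with hAdef
  set b := Xᵀ *ᵥ y with hbdef
  have hpos : ∀ lam > (0:ℝ), (A + lam • S).PosDef := fun lam hlam =>
    hX.add_posSemidef (rls_smul_psd hS hlam.le)
  have hMb : ∀ lam > (0:ℝ), (A + lam • S) *ᵥ (βhat lam) = b := by
    intro lam hlam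
    rw [hβhat lam]
    exact rls_inv_sol (hpos lam hlam) b
  -- expansion of the plain least squares objective
  have hf0 : ∀ β : Fin p → ℝ, ∑ i, (y i - X.mulVec β i) ^ 2
      = y ⬝ᵥ y - 2 * (β ⬝ᵥ b) + β ⬝ᵥ (A *ᵥ β) := by
    intro β
    have h := rls_obj_eq X y S 0 β
    simpa using h
  refine ⟨hpos, ?_, ?_⟩
  · -- minimizing property of the penalized estimator
    intro lam hlam β
    have hM := hpos lam hlam
    set M := A + lam • S with hMdef
    have h1 := rls_obj_eq X y S lam (βhat lam)
    have h2 := rls_obj_eq X y S lam β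
    rw [h1, h2]
    have hexp : (β - βhat lam) ⬝ᵥ (M *ᵥ (β - βhat lam))
        = β ⬝ᵥ (M *ᵥ β) - 2 * (β ⬝ᵥ (M *ᵥ βhat lam)) + (βhat lam) ⬝ᵥ (M *ᵥ βhat lam) := by
      rw [mulVec_sub, dotProduct_sub, sub_dotProduct, sub_dotProduct,
        rls_symm_dot hM.1 (βhat lam) β]
      ring
    have hcross : β ⬝ᵥ (M *ᵥ βhat lam) = β ⬝ᵥ b := by rw [hMb lam hlam]
    have hself : (βhat lam) ⬝ᵥ (M *ᵥ βhat lam) = (βhat lam) ⬝ᵥ b := by rw [hMb lam hlam]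
    have hnn : 0 ≤ (β - βhat lam) ⬝ᵥ (M *ᵥ (β - βhat lam)) :=
      rls_psd_dot hM.posSemidef _
    rw [hexp, hcross, hself] at hnn
    linarith
  · -- the limiting constrained minimizer
    obtain ⟨β₀, w, hSβ₀, hsol⟩ := rls_exists_sol hX hS b
    have hAβ₀ : A *ᵥ β₀ = b - S *ᵥ w := eq_sub_of_add_eq hsol
    have hdotw : ∀ β : Fin p → ℝ, S *ᵥ β = 0 → β ⬝ᵥ (S *ᵥ w) = 0 := by
      intro β hβ
      rw [rls_symm_dot hS.1 β w, hβ, dotProduct_zero]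
    have hbA : ∀ β : Fin p → ℝ, S *ᵥ β = 0 → β ⬝ᵥ (A *ᵥ β₀) = β ⬝ᵥ b := by
      intro β hβ
      rw [hAβ₀, dotProduct_sub, hdotw β hβ, sub_zero]
    have hexp0 : ∀ β : Fin p → ℝ, (β - β₀) ⬝ᵥ (A *ᵥ (β - β₀))
        = β ⬝ᵥ (A *ᵥ β) - 2 * (β ⬝ᵥ (A *ᵥ β₀)) + β₀ ⬝ᵥ (A *ᵥ β₀) := by
      intro β
      rw [mulVec_sub, dotProduct_sub, sub_dotProduct, sub_dotProduct,
        rls_symm_dot hX.1 β₀ β]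
      ring
    have hmin0 : ∀ β : Fin p → ℝ, S *ᵥ β = 0 →
        ∑ i, (y i - X.mulVec β₀ i) ^ 2 ≤ ∑ i, (y i - X.mulVec β i) ^ 2 := by
      intro β hβ
      have hnn : 0 ≤ (β - β₀) ⬝ᵥ (A *ᵥ (β - β₀)) := rls_psd_dot hX.posSemidef _
      have hb0 : β₀ ⬝ᵥ (A *ᵥ β₀) = β₀ ⬝ᵥ b := hbA β₀ hSβ₀
      rw [hexp0 β, hbA β hβ, hb0] at hnn
      rw [hf0 β, hf0 β₀]
      linarith
    refine ⟨β₀, hSβ₀, hmin0, ?_, ?_⟩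
    · -- uniqueness
      intro β hβ hmin
      have h1 := hmin β₀ hSβ₀
      have h2 := hmin0 β hβ
      have heq : (β - β₀) ⬝ᵥ (A *ᵥ (β - β₀)) = 0 := by
        have e1 := hf0 β
        have e2 := hf0 β₀
        have e3 := hexp0 β
        have hb0 : β₀ ⬝ᵥ (A *ᵥ β₀) = β₀ ⬝ᵥ b := hbA β₀ hSβ₀
        rw [hbA β hβ, hb0] at e3
        linarith
      by_contra hne
      have hpos' := rls_posdef_dot hX (sub_ne_zero.mpr hne)
      rw [heq] at hpos'
      exact lt_irrefl 0 hpos'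
    · -- convergence
      obtain ⟨c, hc, hcoer⟩ := rls_coercive hX
      set r := (A *ᵥ w) ⬝ᵥ (A *ᵥ w) with hr
      have hrnn : 0 ≤ r := rls_dot_self_nonneg _
      have hkey : ∀ lam : ℝ, 0 < lam → ∃ g : Fin p → ℝ,
          βhat lam - β₀ = lam⁻¹ • (w - g) ∧ g ⬝ᵥ g ≤ r / c ^ 2 := by
        intro lam hlam
        set M := A + lam • S with hMdef
        have hM := hpos lam hlam
        have hdet : IsUnit M.det := (Matrix.isUnit_iff_isUnit_det _).mp hM.isUnit
        have hinv : ∀ x : Fin p → ℝ, M⁻¹ *ᵥ (M *ᵥ x) = x := by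
          intro x
          rw [mulVec_mulVec, Matrix.nonsing_inv_mul _ hdet, one_mulVec]
        set g := M⁻¹ *ᵥ (A *ᵥ w) with hg
        refine ⟨g, ?_, ?_⟩
        · have e1 : M *ᵥ (βhat lam - β₀) = S *ᵥ w := by
            have hMβ₀ : M *ᵥ β₀ = A *ᵥ β₀ := by
              rw [hMdef, add_mulVec, smul_mulVec, hSβ₀, smul_zero, add_zero]
            rw [mulVec_sub, hMb lam hlam, hMβ₀, hAβ₀]
            abel
          have e2 : βhat lam - β₀ = M⁻¹ *ᵥ (S *ᵥ w) := by
            rw [← e1, hinv]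
          have e3 : S *ᵥ w = lam⁻¹ • (M *ᵥ w - A *ᵥ w) := by
            have : M *ᵥ w - A *ᵥ w = lam • (S *ᵥ w) := by
              rw [hMdef, add_mulVec, smul_mulVec]
              abel
            rw [this, smul_smul, inv_mul_cancel₀ hlam.ne', one_smul]
          rw [e2, e3, mulVec_smul, mulVec_sub, hinv w, hg]
        · have hq : 0 ≤ g ⬝ᵥ g := rls_dot_self_nonneg g
          have hMg : M *ᵥ g = A *ᵥ w := rls_inv_sol hM (A *ᵥ w)
          have hstep : c * (g ⬝ᵥ g) ≤ g ⬝ᵥ (A *ᵥ w) := by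
            have h1 : c * (g ⬝ᵥ g) ≤ g ⬝ᵥ (A *ᵥ g) := hcoer g
            have h2 : g ⬝ᵥ (A *ᵥ g) ≤ g ⬝ᵥ (M *ᵥ g) := by
              have h3 : 0 ≤ lam * (g ⬝ᵥ (S *ᵥ g)) :=
                mul_nonneg hlam.le (rls_psd_dot hS g)
              rw [hMdef, add_mulVec, dotProduct_add, smul_mulVec,
                dotProduct_smul, smul_eq_mul]
              linarith
            rw [hMg] at h2
            linarith
          have hcs : (g ⬝ᵥ (A *ᵥ w)) ^ 2 ≤ (g ⬝ᵥ g) * r := rls_cs g (A *ᵥ w)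
          rw [le_div_iff₀ (by positivity : (0:ℝ) < c ^ 2)]
          rcases eq_or_lt_of_le hq with hq0 | hqpos
          · rw [← hq0]
            simpa using hrnn
          · have h7 : (c * (g ⬝ᵥ g)) ^ 2 ≤ (g ⬝ᵥ (A *ᵥ w)) ^ 2 :=
              pow_le_pow_left₀ (mul_nonneg hc.le hq) hstep 2
            nlinarith [h7, hcs, hqpos, hc]
      rw [tendsto_pi_nhds]
      intro i
      set Cb := Real.sqrt (r / c ^ 2) with hCb
      have hgb : ∀ g : Fin p → ℝ, g ⬝ᵥ g ≤ r / c ^ 2 → |g i| ≤ Cb := by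
        intro g hgle
        have h6 : g i * g i ≤ g ⬝ᵥ g :=
          Finset.single_le_sum (fun j _ => mul_self_nonneg (g j)) (Finset.mem_univ i)
        rw [← Real.sqrt_mul_self_eq_abs]
        exact Real.sqrt_le_sqrt (le_trans h6 hgle)
      have hzero : Tendsto (fun lam => βhat lam i - β₀ i) atTop (nhds 0) := by
        apply squeeze_zero_norm' (a := fun lam => (|w i| + Cb) * lam⁻¹)
        · filter_upwards [eventually_gt_atTop (0:ℝ)] with lam hlam
          obtain ⟨g, hg1, hg2⟩ := hkey lam hlam
          have hcoord : βhat lam i - β₀ i = lam⁻¹ * (w i - g i) := by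
            have := congrFun hg1 i
            simpa using this
          rw [Real.norm_eq_abs, hcoord, abs_mul, abs_inv, abs_of_pos hlam, mul_comm]
          apply mul_le_mul_of_nonneg_right _ (inv_nonneg.mpr hlam.le)
          calc |w i - g i| ≤ |w i| + |g i| := abs_sub _ _
            _ ≤ |w i| + Cb := by linarith [hgb g hg2]
        · simpa using tendsto_inv_atTop_zero.const_mul (|w i| + Cb)
      exact tendsto_sub_nhds_zero_iff.mp hzero
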